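/- Let p(t) = t^n - c_1 t^{n-1} - ... - c_n with all c_k ≥ 0, some c_k > 0, and gcd{k : c_k > 0} = 1. Then the unique positive root ρ of p satisfies ρ > |λ| for every other root λ of p. -/

import Mathlib

open Matrix Polynomial Finset

/-- The polynomial `p(t) = t^n - c 1 * t^(n-1) - ⋯ - c n`. -/
noncomputable def polyOf (n : ℕ) (c : ℕ → ℝ) : Polynomial ℝ :=
  X ^ n - ∑ k ∈ Finset.Icc 1 n, Polynomial.C (c k) * X ^ (n - k)

/-- Companion matrix of `p(t) = t^n - c 1 * t^(n-1) - ⋯ - c n`: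
ones on the superdiagonal, last row `(c n, c (n-1), …, c 1)`, zeros elsewhere. -/
def companionOf (n : ℕ) (c : ℕ → ℝ) : Matrix (Fin n) (Fin n) ℝ :=
  fun i j => if (i : ℕ) + 1 = (j : ℕ) then 1
    else if (i : ℕ) = n - 1 then c (n - (j : ℕ)) else 0

/-- The characteristic polynomial of a real matrix, viewed over `ℂ`. -/
noncomputable def specPoly {n : ℕ} (A : Matrix (Fin n) (Fin n) ℝ) : Polynomial ℂ :=
  A.charpoly.map (algebraMap ℝ ℂ)

/-- `A` is spectrally Perron: it has a simple positive real eigenvalue `ρ`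
strictly exceeding the modulus of every other eigenvalue. -/
def SpectrallyPerron {n : ℕ} (A : Matrix (Fin n) (Fin n) ℝ) : Prop :=
  ∃ ρ : ℝ, 0 < ρ ∧ (specPoly A).rootMultiplicity (ρ : ℂ) = 1 ∧
    ∀ z : ℂ, (specPoly A).IsRoot z → z ≠ (ρ : ℂ) → ‖z‖ < ρ

/-- `A` is weakly spectrally Perron: it has a simple positive real eigenvalue `ρ`
with `ρ ≥ |λ|` for every eigenvalue `λ` of `A`. -/
def WeaklySpectrallyPerron {n : ℕ} (A : Matrix (Fin n) (Fin n) ℝ) : Prop :=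
  ∃ ρ : ℝ, 0 < ρ ∧ (specPoly A).rootMultiplicity (ρ : ℂ) = 1 ∧
    ∀ z : ℂ, (specPoly A).IsRoot z → ‖z‖ ≤ ρ

private lemma eval_polyOf (n : ℕ) (c : ℕ → ℝ) (x : ℝ) :
    (polyOf n c).eval x = x ^ n - ∑ k ∈ Finset.Icc 1 n, c k * x ^ (n - k) := by
  simp [polyOf, eval_finset_sum]

private lemma eval_polyOf_map (n : ℕ) (c : ℕ → ℝ) (z : ℂ) :
    ((polyOf n c).map (algebraMap ℝ ℂ)).eval z
      = z ^ n - ∑ k ∈ Finset.Icc 1 n, (c k : ℂ) * z ^ (n - k) := by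
  simp [polyOf, Polynomial.map_sub, Polynomial.map_sum, eval_finset_sum]

/-- Strict monotonicity step: if `a` is a positive root and `a < b`, then the sum at `b`
is strictly below `b ^ n`. -/
private lemma sum_lt_pow (n : ℕ) (hn : 1 ≤ n) (c : ℕ → ℝ)
    (hc : ∀ k ∈ Finset.Icc 1 n, 0 ≤ c k) {a b : ℝ} (ha : 0 < a) (hab : a < b)
    (hroot : a ^ n = ∑ k ∈ Finset.Icc 1 n, c k * a ^ (n - k)) :
    ∑ k ∈ Finset.Icc 1 n, c k * b ^ (n - k) < b ^ n := by
  have hb : 0 < b := ha.trans hab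
  have key : (∑ k ∈ Finset.Icc 1 n, c k * b ^ (n - k)) * a ^ (n - 1)
      ≤ (∑ k ∈ Finset.Icc 1 n, c k * a ^ (n - k)) * b ^ (n - 1) := by
    rw [Finset.sum_mul, Finset.sum_mul]
    refine Finset.sum_le_sum fun k hk => ?_
    obtain ⟨hk1, hk2⟩ := Finset.mem_Icc.mp hk
    have h1 : n - 1 = (n - k) + (k - 1) := by omega
    rw [h1, pow_add, pow_add]
    calc c k * b ^ (n - k) * (a ^ (n - k) * a ^ (k - 1))
        = (c k * a ^ (n - k) * b ^ (n - k)) * a ^ (k - 1) := by ring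
      _ ≤ (c k * a ^ (n - k) * b ^ (n - k)) * b ^ (k - 1) := by
          refine mul_le_mul_of_nonneg_left (pow_le_pow_left₀ ha.le hab.le _) ?_
          exact mul_nonneg (mul_nonneg (hc k hk) (pow_pos ha _).le) (pow_pos hb _).le
      _ = c k * a ^ (n - k) * (b ^ (n - k) * b ^ (k - 1)) := by ring
  have h2 : a ^ n * b ^ (n - 1) < b ^ n * a ^ (n - 1) := by
    have hna : a ^ n = a * a ^ (n - 1) := by
      conv_lhs => rw [show n = 1 + (n - 1) by omega, pow_add, pow_one]
    have hnb : b ^ n = b * b ^ (n - 1) := by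
      conv_lhs => rw [show n = 1 + (n - 1) by omega, pow_add, pow_one]
    rw [hna, hnb]
    have : a * (a ^ (n - 1) * b ^ (n - 1)) < b * (a ^ (n - 1) * b ^ (n - 1)) :=
      mul_lt_mul_of_pos_right hab (mul_pos (pow_pos ha _) (pow_pos hb _))
    linarith
  have h3 : (∑ k ∈ Finset.Icc 1 n, c k * b ^ (n - k)) * a ^ (n - 1) < b ^ n * a ^ (n - 1) := by
    calc (∑ k ∈ Finset.Icc 1 n, c k * b ^ (n - k)) * a ^ (n - 1)
        ≤ (∑ k ∈ Finset.Icc 1 n, c k * a ^ (n - k)) * b ^ (n - 1) := key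
      _ = a ^ n * b ^ (n - 1) := by rw [hroot]
      _ < b ^ n * a ^ (n - 1) := h2
  exact lt_of_mul_lt_mul_right h3 (pow_pos ha _).le


/-- Strict Perron property: if moreover `gcd {k : c k > 0} = 1`, the unique
positive root `ρ` of `p` strictly dominates the modulus of every other root. -/
theorem strict_perron_root (n : ℕ) (hn : 1 ≤ n) (c : ℕ → ℝ)
    (hc : ∀ k ∈ Finset.Icc 1 n, 0 ≤ c k)
    (hne : ∃ k ∈ Finset.Icc 1 n, 0 < c k)
    (hd : ((Finset.Icc 1 n).filter (fun k => 0 < c k)).gcd id = 1) :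
    ∃ ρ : ℝ, 0 < ρ ∧ (polyOf n c).IsRoot ρ ∧
      (∀ x : ℝ, 0 < x → (polyOf n c).IsRoot x → x = ρ) ∧
      ∀ z : ℂ, ((polyOf n c).map (algebraMap ℝ ℂ)).IsRoot z → z ≠ (ρ : ℂ) →
        ‖z‖ < ρ := by
  obtain ⟨k₀, hk₀mem, hk₀pos⟩ := hne
  obtain ⟨hk₀1, hk₀n⟩ := Finset.mem_Icc.mp hk₀mem
  -- the evaluation function
  set F : ℝ → ℝ := fun x => (polyOf n c).eval x with hF
  -- existence of a positive root via IVT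
  set x₀ : ℝ := min 1 (c k₀) with hx₀def
  have hx₀pos : 0 < x₀ := lt_min one_pos hk₀pos
  have hx₀le1 : x₀ ≤ 1 := min_le_left _ _
  set x₁ : ℝ := max 1 (∑ k ∈ Finset.Icc 1 n, c k) + 1 with hx₁def
  have hx₁ge1 : 1 ≤ x₁ := le_add_of_le_of_nonneg (le_max_left _ _) zero_le_one
  have hx₀x₁ : x₀ ≤ x₁ := hx₀le1.trans hx₁ge1
  have hFx₀ : F x₀ ≤ 0 := by
    show (polyOf n c).eval x₀ ≤ 0
    rw [eval_polyOf, sub_nonpos]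
    have h1 : x₀ ^ n ≤ c k₀ * x₀ ^ (n - k₀) := by
      have : x₀ ^ n = x₀ ^ k₀ * x₀ ^ (n - k₀) := by
        rw [← pow_add]; congr 1; omega
      rw [this]
      refine mul_le_mul_of_nonneg_right ?_ (pow_pos hx₀pos _).le
      calc x₀ ^ k₀ ≤ x₀ := pow_le_of_le_one hx₀pos.le hx₀le1 (by omega)
        _ ≤ c k₀ := min_le_right _ _
    refine h1.trans (Finset.single_le_sum (f := fun k => c k * x₀ ^ (n - k)) (fun k hk => ?_) hk₀mem)
    exact mul_nonneg (hc k hk) (pow_pos hx₀pos _).le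
  have hFx₁ : 0 ≤ F x₁ := by
    show 0 ≤ (polyOf n c).eval x₁
    rw [eval_polyOf, sub_nonneg]
    have h1 : ∑ k ∈ Finset.Icc 1 n, c k * x₁ ^ (n - k)
        ≤ (∑ k ∈ Finset.Icc 1 n, c k) * x₁ ^ (n - 1) := by
      rw [Finset.sum_mul]
      refine Finset.sum_le_sum fun k hk => ?_
      obtain ⟨h1, h2⟩ := Finset.mem_Icc.mp hk
      exact mul_le_mul_of_nonneg_left (pow_le_pow_right₀ hx₁ge1 (by omega)) (hc k hk)
    have h2 : (∑ k ∈ Finset.Icc 1 n, c k) * x₁ ^ (n - 1) ≤ x₁ * x₁ ^ (n - 1) := by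
      refine mul_le_mul_of_nonneg_right ?_ (pow_pos (by linarith) _).le
      calc (∑ k ∈ Finset.Icc 1 n, c k) ≤ max 1 (∑ k ∈ Finset.Icc 1 n, c k) := le_max_right _ _
        _ ≤ x₁ := by rw [hx₁def]; linarith
    have h3 : x₁ * x₁ ^ (n - 1) = x₁ ^ n := by
      rw [← pow_succ']; congr 1; omega
    linarith
  have hcont : ContinuousOn F (Set.Icc x₀ x₁) := ((polyOf n c).continuous_aeval).continuousOn
  have hmem : (0 : ℝ) ∈ Set.Icc (F x₀) (F x₁) := ⟨hFx₀, hFx₁⟩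
  obtain ⟨ρ, hρmem, hρroot⟩ := intermediate_value_Icc hx₀x₁ hcont hmem
  have hρpos : 0 < ρ := lt_of_lt_of_le hx₀pos hρmem.1
  have hρeq : ρ ^ n = ∑ k ∈ Finset.Icc 1 n, c k * ρ ^ (n - k) := by
    have h0 : (polyOf n c).eval ρ = 0 := hρroot
    rw [eval_polyOf] at h0
    linarith
  -- uniqueness of the positive root
  have huniq : ∀ x : ℝ, 0 < x → (polyOf n c).IsRoot x → x = ρ := by
    intro x hx hxroot
    have hxeq : x ^ n = ∑ k ∈ Finset.Icc 1 n, c k * x ^ (n - k) := by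
      have := hxroot
      rw [IsRoot, eval_polyOf] at this
      linarith
    rcases lt_trichotomy x ρ with h | h | h
    · exfalso
      have := sum_lt_pow n hn c hc hx h hxeq
      rw [← hρeq] at this; exact lt_irrefl _ this
    · exact h
    · exfalso
      have := sum_lt_pow n hn c hc hρpos h hρeq
      rw [← hxeq] at this; exact lt_irrefl _ this
  refine ⟨ρ, hρpos, hρroot, huniq, ?_⟩
  -- the complex part
  intro z hz hzne
  have hzeq : z ^ n = ∑ k ∈ Finset.Icc 1 n, (c k : ℂ) * z ^ (n - k) := by
    have := hz
    rw [IsRoot, eval_polyOf_map, sub_eq_zero] at this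
    exact this
  set r : ℝ := ‖z‖ with hr
  have hrnonneg : 0 ≤ r := norm_nonneg z
  -- weak bound: r ≤ ρ
  have habs_sum : r ^ n ≤ ∑ k ∈ Finset.Icc 1 n, c k * r ^ (n - k) := by
    calc r ^ n = ‖z ^ n‖ := by rw [norm_pow]
      _ = ‖∑ k ∈ Finset.Icc 1 n, (c k : ℂ) * z ^ (n - k)‖ := by rw [hzeq]
      _ ≤ ∑ k ∈ Finset.Icc 1 n, ‖(c k : ℂ) * z ^ (n - k)‖ :=
          norm_sum_le _ _
      _ = ∑ k ∈ Finset.Icc 1 n, c k * r ^ (n - k) := by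
          refine Finset.sum_congr rfl fun k hk => ?_
          rw [norm_mul, norm_pow, Complex.norm_real, Real.norm_of_nonneg (hc k hk)]
  have hrle : r ≤ ρ := by
    by_contra h
    push_neg at h
    have := sum_lt_pow n hn c hc hρpos h hρeq
    linarith
  -- equality case: if r = ρ then z = ρ
  rcases lt_or_eq_of_le hrle with h | h
  · exact h
  · exfalso
    apply hzne
    have hzne0 : z ≠ 0 := by
      intro h0
      rw [h0] at hr
      simp at hr
      linarith
    -- each aligned term
    have hkey : ∀ k ∈ (Finset.Icc 1 n).filter (fun k => 0 < c k), z ^ k = (ρ : ℂ) ^ k := by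
      have hsum0 : ∑ k ∈ Finset.Icc 1 n,
          c k * (ρ ^ (n - k) * ρ ^ n - (z ^ (n - k) * (starRingEnd ℂ) (z ^ n)).re) = 0 := by
        have e1 : ∑ k ∈ Finset.Icc 1 n, c k * (z ^ (n - k) * (starRingEnd ℂ) (z ^ n)).re
            = ρ ^ n * ρ ^ n := by
          have : ∑ k ∈ Finset.Icc 1 n, c k * (z ^ (n - k) * (starRingEnd ℂ) (z ^ n)).re
              = ((∑ k ∈ Finset.Icc 1 n, (c k : ℂ) * z ^ (n - k)) * (starRingEnd ℂ) (z ^ n)).re := by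
            rw [Finset.sum_mul, Complex.re_sum]
            refine Finset.sum_congr rfl fun k hk => ?_
            rw [mul_assoc, Complex.re_ofReal_mul]

          rw [this, ← hzeq, Complex.mul_conj]
          have : ‖z ^ n‖ = ρ ^ n := by rw [norm_pow, ← hr, h]
          rw [Complex.normSq_eq_norm_sq, this]
          push_cast
          ring_nf
          rw [← Complex.ofReal_pow, Complex.ofReal_re]
        have e2 : ∑ k ∈ Finset.Icc 1 n, c k * (ρ ^ (n - k) * ρ ^ n)
            = ρ ^ n * ρ ^ n := by
          calc ∑ k ∈ Finset.Icc 1 n, c k * (ρ ^ (n - k) * ρ ^ n)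
              = (∑ k ∈ Finset.Icc 1 n, c k * ρ ^ (n - k)) * ρ ^ n := by
                rw [Finset.sum_mul]
                exact Finset.sum_congr rfl fun k hk => by ring
            _ = ρ ^ n * ρ ^ n := by rw [← hρeq]
        calc ∑ k ∈ Finset.Icc 1 n,
              c k * (ρ ^ (n - k) * ρ ^ n - (z ^ (n - k) * (starRingEnd ℂ) (z ^ n)).re)
            = ∑ k ∈ Finset.Icc 1 n, (c k * (ρ ^ (n - k) * ρ ^ n)
                - c k * (z ^ (n - k) * (starRingEnd ℂ) (z ^ n)).re) := by
              exact Finset.sum_congr rfl fun k hk => by ring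
          _ = 0 := by rw [Finset.sum_sub_distrib, e1, e2, sub_self]
      have hterm_nonneg : ∀ k ∈ Finset.Icc 1 n,
          0 ≤ c k * (ρ ^ (n - k) * ρ ^ n - (z ^ (n - k) * (starRingEnd ℂ) (z ^ n)).re) := by
        intro k hk
        refine mul_nonneg (hc k hk) (sub_nonneg.mpr ?_)
        calc (z ^ (n - k) * (starRingEnd ℂ) (z ^ n)).re
            ≤ ‖z ^ (n - k) * (starRingEnd ℂ) (z ^ n)‖ := Complex.re_le_norm _
          _ = ρ ^ (n - k) * ρ ^ n := by
              rw [norm_mul, norm_pow, Complex.norm_conj, norm_pow, ← hr, h]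
      have hall := (Finset.sum_eq_zero_iff_of_nonneg hterm_nonneg).mp hsum0
      intro k hk
      obtain ⟨hkmem, hkpos⟩ := Finset.mem_filter.mp hk
      have hzero := hall k hkmem
      have hre : (z ^ (n - k) * (starRingEnd ℂ) (z ^ n)).re = ρ ^ (n - k) * ρ ^ n := by
        rcases mul_eq_zero.mp hzero with h1 | h1
        · exact absurd h1 (ne_of_gt hkpos)
        · linarith [sub_eq_zero.mp h1]
      -- the aligned complex number is real
      set w : ℂ := z ^ (n - k) * (starRingEnd ℂ) (z ^ n) with hw
      have habsw : ‖w‖ = ρ ^ (n - k) * ρ ^ n := by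
        rw [hw, norm_mul, norm_pow, Complex.norm_conj, norm_pow, ← hr, h]
      have him : w.im = 0 := by
        rw [← Complex.abs_re_eq_norm, hre, habsw]
        exact abs_of_nonneg (mul_nonneg (pow_nonneg hρpos.le _) (pow_nonneg hρpos.le _))
      have hweq : w = ((ρ ^ (n - k) * ρ ^ n : ℝ) : ℂ) :=
        Complex.ext (by rw [hre, Complex.ofReal_re]) (by rw [him, Complex.ofReal_im])
      -- now derive z ^ k = ρ ^ k
      obtain ⟨hk1, hk2⟩ := Finset.mem_Icc.mp hkmem
      have hz2 : z ^ (n - k) * ((starRingEnd ℂ) (z ^ n) * z ^ n)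
          = ((ρ ^ (n - k) * ρ ^ n : ℝ) : ℂ) * z ^ n := by
        rw [← mul_assoc, ← hw, hweq]
      have hconjz : (starRingEnd ℂ) (z ^ n) * z ^ n = ((ρ ^ n * ρ ^ n : ℝ) : ℂ) := by
        rw [mul_comm, Complex.mul_conj, Complex.normSq_eq_norm_sq, norm_pow, ← hr, h]
        push_cast; ring
      rw [hconjz] at hz2
      have hρn : ((ρ : ℂ)) ≠ 0 := by
        simp only [ne_eq, Complex.ofReal_eq_zero]
        exact ne_of_gt hρpos
      have hzn : z ^ (n - k) ≠ 0 := pow_ne_zero _ hzne0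
      have hsplit : z ^ n = z ^ (n - k) * z ^ k := by
        rw [← pow_add]; congr 1; omega
      rw [hsplit] at hz2
      -- z ^ (n-k) * (ρ^n * ρ^n) = (ρ^(n-k) * ρ^n) * (z^(n-k) * z^k)
      have : z ^ (n - k) * (((ρ : ℂ)) ^ n * ((ρ : ℂ)) ^ n)
          = ((ρ : ℂ)) ^ (n - k) * ((ρ : ℂ)) ^ n * (z ^ (n - k) * z ^ k) := by
        have := hz2
        push_cast at this
        linear_combination this
      have hfin : ((ρ : ℂ)) ^ n = ((ρ : ℂ)) ^ (n - k) * z ^ k := by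
        have hρnne : ((ρ : ℂ)) ^ n ≠ 0 := pow_ne_zero _ hρn
        field_simp at this
        apply mul_left_cancel₀ hzn
        apply mul_left_cancel₀ hρnne
        linear_combination (z ^ (n - k) * ((ρ : ℂ)) ^ n) * this
      have hρsplit : ((ρ : ℂ)) ^ n = ((ρ : ℂ)) ^ (n - k) * ((ρ : ℂ)) ^ k := by
        rw [← pow_add]; congr 1; omega
      rw [hρsplit] at hfin
      have := mul_left_cancel₀ (pow_ne_zero (n - k) hρn) hfin.symm
      exact this
    -- gcd argument
    set u : ℂ := z / (ρ : ℂ) with hu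
    have hρc : ((ρ : ℂ)) ≠ 0 := by
      simp only [ne_eq, Complex.ofReal_eq_zero]; exact ne_of_gt hρpos
    have hupow : ∀ k ∈ (Finset.Icc 1 n).filter (fun k => 0 < c k), u ^ k = 1 := by
      intro k hk
      rw [hu, div_pow, hkey k hk, div_self (pow_ne_zero _ hρc)]
    have horder : orderOf u ∣ ((Finset.Icc 1 n).filter (fun k => 0 < c k)).gcd id := by
      refine Finset.dvd_gcd fun k hk => ?_
      exact orderOf_dvd_of_pow_eq_one (hupow k hk)
    rw [hd] at horder
    have : orderOf u = 1 := Nat.dvd_one.mp horder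
    have hu1 : u = 1 := orderOf_eq_one_iff.mp this
    rw [hu, div_eq_one_iff_eq hρc] at hu1
    exact hu1
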